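/- If K ⊆ ℝⁿ is a closed pseudo-cone, then the closure of ℝ₊(K*) equals the polar cone of the closure of ℝ₊K, i.e., cl(ℝ₊(K*)) = (cl(ℝ₊K))° where C° = {x : ⟨x,y⟩ ≤ 0 for all y ∈ C}. -/

import Mathlib

open Set MeasureTheory
open scoped Classical
open scoped RealInnerProductSpace

noncomputable section

abbrev Euc (n : ℕ) := EuclideanSpace ℝ (Fin n)

/-- A (convex) pseudo-cone: nonempty convex set not containing the origin,
closed under multiplication by scalars `≥ 1`. -/
def IsPseudoCone {n : ℕ} (K : Set (Euc n)) : Prop :=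
  K.Nonempty ∧ Convex ℝ K ∧ (0 : Euc n) ∉ K ∧
    ∀ x ∈ K, ∀ l : ℝ, 1 ≤ l → l • x ∈ K

/-- A closed pseudo-cone. -/
def IsClosedPseudoCone {n : ℕ} (K : Set (Euc n)) : Prop :=
  IsClosed K ∧ IsPseudoCone K

/-- The duality `K* = {x : ⟪x,y⟫ ≤ -1 for all y ∈ K}`. -/
def pcDual {n : ℕ} (K : Set (Euc n)) : Set (Euc n) :=
  {x | ∀ y ∈ K, ⟪x, y⟫ ≤ (-1 : ℝ)}

/-- The recession cone `rec K = {x : K + x ⊆ K}`. -/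
def recCone {n : ℕ} (K : Set (Euc n)) : Set (Euc n) :=
  {x | ∀ y ∈ K, y + x ∈ K}

/-- `ℝ₊ K = {λ • x : λ ≥ 0, x ∈ K}`. -/
def posHull {n : ℕ} (K : Set (Euc n)) : Set (Euc n) :=
  {x | ∃ l : ℝ, 0 ≤ l ∧ ∃ y ∈ K, x = l • y}

/-- The polar cone `C° = {x : ⟪x,y⟫ ≤ 0 for all y ∈ C}`. -/
def polarCone {n : ℕ} (C : Set (Euc n)) : Set (Euc n) :=
  {x | ∀ y ∈ C, ⟪x, y⟫ ≤ (0 : ℝ)}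

/-- Membership in the class `PC^n`: closed pseudo-cones together with `∅` and `ℝⁿ`. -/
def MemPC {n : ℕ} (K : Set (Euc n)) : Prop :=
  IsClosedPseudoCone K ∨ K = ∅ ∨ K = Set.univ

/-- The join in `PC^n`. -/
def pcJoin {n : ℕ} (K L : Set (Euc n)) : Set (Euc n) :=
  if (0 : Euc n) ∈ closure (convexHull ℝ (K ∪ L)) then Set.univ
  else closure (convexHull ℝ (K ∪ L))

theorem closure_posHull_pcDual_eq_polarCone {n : ℕ} (K : Set (Euc n))
    (hK : IsClosedPseudoCone K) :
    closure (posHull (pcDual K)) = polarCone (closure (posHull K)) := by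
  obtain ⟨hKc, hKne, hconv, h0, hscale⟩ := hK
  have hpolarclosed : IsClosed (polarCone K) := by
    have : polarCone K = ⋂ y ∈ K, {x : Euc n | ⟪x, y⟫ ≤ 0} := by
      ext x; simp [polarCone]
    rw [this]
    exact isClosed_biInter fun y _ =>
      isClosed_le (continuous_id.inner continuous_const) continuous_const
  have hpolar : polarCone (closure (posHull K)) = polarCone K := by
    ext x
    constructor
    · intro hx y hy
      exact hx y (subset_closure ⟨1, zero_le_one, y, hy, (one_smul _ _).symm⟩)
    · intro hx y hy
      have hsub : posHull K ⊆ {z : Euc n | ⟪x, z⟫ ≤ 0} := by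
        rintro z ⟨l, hl, w, hw, rfl⟩
        simp only [Set.mem_setOf_eq, real_inner_smul_right]
        exact mul_nonpos_of_nonneg_of_nonpos hl (hx w hw)
      have hcl : IsClosed {z : Euc n | ⟪x, z⟫ ≤ 0} :=
        isClosed_le (continuous_const.inner continuous_id) continuous_const
      exact (closure_minimal hsub hcl) hy
  rw [hpolar]
  -- find v ∈ pcDual K via separation
  obtain ⟨f, u, hf0, hfb⟩ := geometric_hahn_banach_point_closed hconv hKc h0
  have hu : 0 < u := by simpa using hf0
  set w := (InnerProductSpace.toDual ℝ (Euc n)).symm f with hwdef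
  have hw : ∀ x : Euc n, ⟪w, x⟫ = f x := fun x => InnerProductSpace.toDual_symm_apply
  set v : Euc n := (-u⁻¹) • w with hv
  have hvK : v ∈ pcDual K := by
    intro b hb
    have h1 : u < f b := hfb b hb
    have h2 : ⟪v, b⟫ = -u⁻¹ * f b := by rw [hv, real_inner_smul_left, hw]
    have h3 : (1 : ℝ) ≤ u⁻¹ * f b := by
      rw [inv_mul_eq_div]; exact (one_le_div hu).mpr h1.le
    rw [h2, neg_mul]; linarith
  apply Set.Subset.antisymm
  · apply closure_minimal _ hpolarclosed
    rintro z ⟨l, hl, y, hy, rfl⟩ b hb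
    rw [real_inner_smul_left]
    exact mul_nonpos_of_nonneg_of_nonpos hl (le_trans (hy b hb) (by norm_num))
  · intro x hx
    have htend : Filter.Tendsto (fun m : ℕ => x + ((m : ℝ) + 1)⁻¹ • v)
        Filter.atTop (nhds x) := by
      have h1 : Filter.Tendsto (fun m : ℕ => ((m : ℝ) + 1)⁻¹) Filter.atTop (nhds 0) := by
        simpa using tendsto_one_div_add_atTop_nhds_zero_nat (𝕜 := ℝ)
      have h2 := (h1.smul_const v).const_add x
      simpa using h2
    apply mem_closure_of_tendsto htend
    filter_upwards with m
    have hm : (0 : ℝ) < (m : ℝ) + 1 := by positivity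
    refine ⟨((m : ℝ) + 1)⁻¹, by positivity, ((m : ℝ) + 1) • x + v, ?_, ?_⟩
    · intro b hb
      rw [inner_add_left, real_inner_smul_left]
      nlinarith [hvK b hb, hx b hb]
    · rw [smul_add, inv_smul_smul₀ (ne_of_gt hm)]
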